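/- Let F ∈ MKΦ₊(A) and suppose A = M₁ ⊕̃ N₁ → M₂ ⊕̃ N₂ = A and A = M₁' ⊕̃ N₁' → M₂' ⊕̃ N₂' = A are two MKΦ₊-decompositions for F. If the orthogonal projection P_{N₂} belongs to F, then P_{N₂'} ∈ F. -/

import Mathlib

variable {A : Type*}

/-- An orthogonal projection in a C*-algebra. -/
def IsProjectionElem [CStarAlgebra A] (p : A) : Prop := IsSelfAdjoint p ∧ p * p = p

/-- Murray–von Neumann equivalence of projections: `p ∼ q`. -/
def MvNEquiv [CStarAlgebra A] (p q : A) : Prop := ∃ v : A, v * star v = p ∧ star v * v = q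

/-- Murray–von Neumann subequivalence `p ⪯ q`: `p` is equivalent to a
subprojection of `q`. -/
def MvNSubEquiv [CStarAlgebra A] (p q : A) : Prop :=
  ∃ p' : A, IsProjectionElem p' ∧ p' * q = p' ∧ q * p' = p' ∧ MvNEquiv p p'

/-- `a` is invertible up to the pair of projections `(p, q)`. -/
def InvertibleUpTo [CStarAlgebra A] (a p q : A) : Prop :=
  ∃ b : A, (1 - q) * a * (1 - p) * b = 1 - q ∧ b * ((1 - q) * a * (1 - p)) = 1 - p

/-- An ideal of finite type elements in a unital C*-algebra `A`
(Kečkić–Lazović): a selfadjoint (two-sided, complex-linear) ideal possessing an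
approximate unit of projections, and such that for any two projections `p, q`
in the ideal there is `v` with `v v* = q` and `v* v ⊥ p`. -/
structure FiniteTypeIdeal (A : Type*) [CStarAlgebra A] where
  carrier : Set A
  zero_mem : (0 : A) ∈ carrier
  add_mem : ∀ {a b : A}, a ∈ carrier → b ∈ carrier → a + b ∈ carrier
  smul_mem : ∀ (c : ℂ) {a : A}, a ∈ carrier → c • a ∈ carrier
  mul_mem_left : ∀ (a : A) {b : A}, b ∈ carrier → a * b ∈ carrier
  mul_mem_right : ∀ (a : A) {b : A}, b ∈ carrier → b * a ∈ carrier
  star_mem : ∀ {a : A}, a ∈ carrier → star a ∈ carrier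
  approx_unit : ∀ {a : A}, a ∈ carrier → ∀ ε : ℝ, 0 < ε →
    ∃ p ∈ carrier, IsProjectionElem p ∧ ‖a * p - a‖ < ε ∧ ‖p * a - a‖ < ε
  exchange : ∀ {p q : A}, p ∈ carrier → q ∈ carrier →
    IsProjectionElem p → IsProjectionElem q →
    ∃ v : A, v * star v = q ∧ IsProjectionElem (star v * v + p)

variable [CStarAlgebra A]

/-- Upper semi-Fredholm type elements `KΦ₊(A)`. -/
def UpperSemiFredholm (F : FiniteTypeIdeal A) (a : A) : Prop :=
  ∃ p q : A, IsProjectionElem p ∧ IsProjectionElem q ∧ p ∈ F.carrier ∧ InvertibleUpTo a p q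

/-- Lower semi-Fredholm type elements `KΦ₋(A)`. -/
def LowerSemiFredholm (F : FiniteTypeIdeal A) (a : A) : Prop :=
  ∃ p q : A, IsProjectionElem p ∧ IsProjectionElem q ∧ q ∈ F.carrier ∧ InvertibleUpTo a p q

/-- Fredholm type elements `KΦ(A)`. -/
def FredholmType (F : FiniteTypeIdeal A) (a : A) : Prop :=
  ∃ p q : A, IsProjectionElem p ∧ IsProjectionElem q ∧ p ∈ F.carrier ∧ q ∈ F.carrier ∧
    InvertibleUpTo a p q

/-- Upper semi-Weyl type elements `KΦ₊⁻(A)`. -/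
def UpperSemiWeyl (F : FiniteTypeIdeal A) (a : A) : Prop :=
  ∃ p q : A, IsProjectionElem p ∧ IsProjectionElem q ∧ p ∈ F.carrier ∧ MvNSubEquiv p q ∧
    InvertibleUpTo a p q

/-- Lower semi-Weyl type elements `KΦ₋⁺(A)`. -/
def LowerSemiWeyl (F : FiniteTypeIdeal A) (a : A) : Prop :=
  ∃ p q : A, IsProjectionElem p ∧ IsProjectionElem q ∧ q ∈ F.carrier ∧ MvNSubEquiv q p ∧
    InvertibleUpTo a p q

/-- Weyl type elements `KΦ₀(A)`. -/
def WeylType (F : FiniteTypeIdeal A) (a : A) : Prop :=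
  ∃ p q : A, IsProjectionElem p ∧ IsProjectionElem q ∧ p ∈ F.carrier ∧ q ∈ F.carrier ∧
    MvNEquiv p q ∧ InvertibleUpTo a p q

/-- The orthogonal complement of a subset of `A`, viewed as a Hilbert
`A`-module over itself with inner product `⟪x, y⟫ = x* y`. -/
def OrthoComplement (S : Set A) : Set A := {x : A | ∀ n ∈ S, star n * x = 0}

/-- A subset (submodule) of `A` is orthogonally complementable if every element
of `A` decomposes as a sum of an element of `S` and an element of `S^⊥`. -/
def IsOrthoComplementable (S : Set A) : Prop :=
  ∀ x : A, ∃ n ∈ S, ∃ m ∈ OrthoComplement S, x = n + m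

/-- A closed submodule `N` of `A` is (topologically) complementable if there is
a closed submodule `L` with `N ⊓ L = 0` and `N + L = A`. -/
def IsComplementable (N : Submodule Aᵐᵒᵖ A) : Prop :=
  ∃ L : Submodule Aᵐᵒᵖ A, IsClosed (L : Set A) ∧ N ⊓ L = ⊥ ∧ N ⊔ L = ⊤

/-- An orthogonal projection in `B(A)`: an idempotent which is self-adjoint
with respect to the `A`-valued inner product. -/
def IsOrthogonalProjectionOp (P : A →L[Aᵐᵒᵖ] A) : Prop :=
  P * P = P ∧ ∀ x y : A, star (P x) * y = star x * P y

/-- Invertibility of `F ∈ B(A)` up to a pair of projections `(P, Q)`. -/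
def OpInvertibleUpTo (F P Q : A →L[Aᵐᵒᵖ] A) : Prop :=
  ∃ D : A →L[Aᵐᵒᵖ] A,
    (1 - Q) * F * (1 - P) * D = 1 - Q ∧ D * ((1 - Q) * F * (1 - P)) = 1 - P

/-- An `MKΦ₊`-decomposition for `T ∈ B(A)`: a pair of decompositions
`A = M₁ ⊕̃ N₁` and `A = M₂ ⊕̃ N₂` into closed complementable submodules with
respect to which `T` is diagonal, the restriction `T : M₁ → M₂` is an
isomorphism (onto `M₂` and bounded below), and the orthogonal projection onto
`N₁` is a finite type element. -/
def MKPhiPlusDecomp (F : FiniteTypeIdeal A) (T : A →L[Aᵐᵒᵖ] A)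
    (M₁ N₁ M₂ N₂ : Submodule Aᵐᵒᵖ A) : Prop :=
  IsClosed (M₁ : Set A) ∧ IsClosed (N₁ : Set A) ∧
  IsClosed (M₂ : Set A) ∧ IsClosed (N₂ : Set A) ∧
  M₁ ⊓ N₁ = ⊥ ∧ M₁ ⊔ N₁ = ⊤ ∧ M₂ ⊓ N₂ = ⊥ ∧ M₂ ⊔ N₂ = ⊤ ∧
  (∀ x ∈ M₁, T x ∈ M₂) ∧ (∀ x ∈ N₁, T x ∈ N₂) ∧
  (⇑T '' (M₁ : Set A) = (M₂ : Set A)) ∧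
  (∃ c : ℝ, 0 < c ∧ ∀ x ∈ M₁, c * ‖x‖ ≤ ‖T x‖) ∧
  (∃ p : A, IsProjectionElem p ∧ p ∈ F.carrier ∧ {x : A | p * x = x} = (N₁ : Set A))

open MulOpposite in
private lemma proj_mul_aux {A : Type*} [CStarAlgebra A] (M N : Submodule Aᵐᵒᵖ A)
    (h : IsCompl M N) (x : A) :
    (↑(M.linearProjOfIsCompl N h 1) : A) * x = ↑(M.linearProjOfIsCompl N h x) := by
  have hx : op x • (1 : A) = x := by rw [op_smul_eq_mul, one_mul]
  calc (↑(M.linearProjOfIsCompl N h 1) : A) * x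
      = op x • (↑(M.linearProjOfIsCompl N h 1) : A) := (op_smul_eq_mul _ _).symm
    _ = ↑(op x • (M.linearProjOfIsCompl N h 1)) := rfl
    _ = ↑(M.linearProjOfIsCompl N h (op x • (1 : A))) := by rw [map_smul]
    _ = ↑(M.linearProjOfIsCompl N h x) := by rw [hx]

/-- Lemma R12 L01: if `F ∈ MKΦ₊(A)` admits two `MKΦ₊`-decompositions
`A = M₁ ⊕̃ N₁ → M₂ ⊕̃ N₂ = A` and `A = M₁' ⊕̃ N₁' → M₂' ⊕̃ N₂' = A`, and the
orthogonal projection onto `N₂` is of finite type, then so is the orthogonal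
projection onto `N₂'`. -/
theorem mkPhiPlus_decomp_transfer (F : FiniteTypeIdeal A) (T : A →L[Aᵐᵒᵖ] A)
    (M₁ N₁ M₂ N₂ M₁' N₁' M₂' N₂' : Submodule Aᵐᵒᵖ A)
    (h1 : MKPhiPlusDecomp F T M₁ N₁ M₂ N₂)
    (h2 : MKPhiPlusDecomp F T M₁' N₁' M₂' N₂')
    (q q' : A) (hq : IsProjectionElem q) (hq' : IsProjectionElem q')
    (hqr : {x : A | q * x = x} = (N₂ : Set A))
    (hqr' : {x : A | q' * x = x} = (N₂' : Set A))
    (hqF : q ∈ F.carrier) : q' ∈ F.carrier := by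
  classical
  obtain ⟨-, -, -, -, hd1, hc1, hd2, hc2, hTM, -, hTimg, ⟨c, hc0, hbnd⟩, -⟩ := h1
  obtain ⟨-, -, -, -, hd1', hc1', hd2', hc2', hTM', -, -, -, ⟨p', hp'proj, hp'F, hp'r⟩⟩ := h2
  set t : A := T 1 with ht
  have hTmul : ∀ x : A, T x = t * x := by
    intro x
    have hx : MulOpposite.op x • (1 : A) = x := by rw [op_smul_eq_mul, one_mul]
    calc T x = T (MulOpposite.op x • (1 : A)) := by rw [hx]
      _ = MulOpposite.op x • T 1 := by rw [map_smul]
      _ = t * x := by rw [op_smul_eq_mul, ht]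
  have hCompl2 : IsCompl M₂ N₂ := ⟨disjoint_iff.mpr hd2, codisjoint_iff.mpr hc2⟩
  have hCompl1 : IsCompl M₁ N₁ := ⟨disjoint_iff.mpr hd1, codisjoint_iff.mpr hc1⟩
  have hCompl1' : IsCompl M₁' N₁' := ⟨disjoint_iff.mpr hd1', codisjoint_iff.mpr hc1'⟩
  have hCompl2' : IsCompl M₂' N₂' := ⟨disjoint_iff.mpr hd2', codisjoint_iff.mpr hc2'⟩
  -- element e : projection onto N₂ along M₂ evaluated at 1
  set e : A := ↑(N₂.linearProjOfIsCompl M₂ hCompl2.symm 1) with he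
  have heN₂ : e ∈ N₂ := (N₂.linearProjOfIsCompl M₂ hCompl2.symm 1).2
  have hqe : q * e = e := by
    have : e ∈ {x : A | q * x = x} := hqr ▸ heN₂
    exact this
  -- the restriction τ : M₁ → M₂ is bijective
  set τ : M₁ →ₗ[Aᵐᵒᵖ] M₂ := (T : A →ₗ[Aᵐᵒᵖ] A).restrict hTM with hτ
  have hτinj : Function.Injective τ := by
    intro x y hxy
    have hxyv : T ((x : A) - y) = 0 := by
      have : (τ x : A) = (τ y : A) := by rw [hxy]
      simp only [hτ, LinearMap.restrict_apply] at this
      simp only [map_sub]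
      simp only [ContinuousLinearMap.coe_coe] at this
      rw [this]; abel
    have hmem : ((x : A) - y) ∈ M₁ := sub_mem x.2 y.2
    have hb := hbnd _ hmem
    rw [hxyv, norm_zero] at hb
    have hnn : ‖(x : A) - y‖ = 0 := by nlinarith [norm_nonneg ((x : A) - y)]
    exact Subtype.ext (sub_eq_zero.mp (norm_eq_zero.mp hnn))
  have hτsurj : Function.Surjective τ := by
    rintro ⟨y, hy⟩
    have : y ∈ ⇑T '' (M₁ : Set A) := hTimg ▸ hy
    obtain ⟨x, hxM, hxy⟩ := this
    refine ⟨⟨x, hxM⟩, ?_⟩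
    apply Subtype.ext
    simp only [hτ, LinearMap.restrict_apply, ContinuousLinearMap.coe_coe]
    exact hxy
  set σ := (LinearEquiv.ofBijective τ ⟨hτinj, hτsurj⟩).symm with hσ
  set m₂ : M₂ := M₂.linearProjOfIsCompl N₂ hCompl2 1 with hm₂
  set d : A := ↑(σ m₂) with hd
  have htd : t * d = 1 - e := by
    have h1 : (LinearEquiv.ofBijective τ ⟨hτinj, hτsurj⟩) (σ m₂) = m₂ :=
      (LinearEquiv.ofBijective τ ⟨hτinj, hτsurj⟩).apply_symm_apply m₂
    have h2 : T d = (m₂ : A) := by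
      have : (τ (σ m₂) : A) = (m₂ : A) := by
        rw [show (LinearEquiv.ofBijective τ ⟨hτinj, hτsurj⟩) (σ m₂) = τ (σ m₂) from rfl] at h1
        rw [h1]
      simp only [hτ, LinearMap.restrict_apply, ContinuousLinearMap.coe_coe] at this
      exact this
    have h3 : (m₂ : A) + e = 1 :=
      Submodule.projection_add_projection_eq_self hCompl2 1
    rw [← hTmul, h2, ← h3]; abel
  -- element e' : projection onto N₂' along M₂' at 1
  set e' : A := ↑(N₂'.linearProjOfIsCompl M₂' hCompl2'.symm 1) with he'
  have he'M₂' : ∀ x ∈ M₂', e' * x = 0 := by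
    intro x hx
    rw [he', proj_mul_aux]
    exact congrArg Subtype.val (Submodule.linearProjOfIsCompl_apply_right' hCompl2'.symm hx)
  have hq'N₂' : q' ∈ N₂' := by
    have : q' ∈ {x : A | q' * x = x} := hq'.2
    rw [hqr'] at this; exact this
  have he'q' : e' * q' = q' := by
    rw [he', proj_mul_aux]
    have := Submodule.linearProjOfIsCompl_apply_left hCompl2'.symm ⟨q', hq'N₂'⟩
    rw [show ((⟨q', hq'N₂'⟩ : N₂') : A) = q' from rfl] at this
    exact congrArg Subtype.val this
  -- element f' : projection onto N₁' along M₁' at 1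
  set f' : A := ↑(N₁'.linearProjOfIsCompl M₁' hCompl1'.symm 1) with hf'
  have hf'N₁' : f' ∈ N₁' := (N₁'.linearProjOfIsCompl M₁' hCompl1'.symm 1).2
  have hp'f' : p' * f' = f' := by
    have : f' ∈ {x : A | p' * x = x} := hp'r ▸ hf'N₁'
    exact this
  have h1f' : (1 : A) - f' ∈ M₁' := by
    have h3 : ((M₁'.linearProjOfIsCompl N₁' hCompl1' 1 : A)) + f' = 1 :=
      Submodule.projection_add_projection_eq_self hCompl1' 1
    rw [← (eq_sub_of_add_eq h3)]; exact (M₁'.linearProjOfIsCompl N₁' hCompl1' 1).2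
  have hkey : e' * (t * (1 - f')) = 0 := by
    rw [← hTmul]
    exact he'M₂' _ (hTM' _ h1f')
  -- membership computations
  have hf'F : f' ∈ F.carrier := hp'f' ▸ F.mul_mem_right f' hp'F
  have heF : e ∈ F.carrier := hqe ▸ F.mul_mem_right e hqF
  have halg : e' = ((e' * t) * f') * d + e' * e := by
    have h4 : e' * (t * d) = e' * (1 - e) := by rw [htd]
    calc e' = e' * (t * d) + e' * e := by rw [h4]; noncomm_ring
      _ = ((e' * t) * f') * d + (e' * (t * (1 - f'))) * d + e' * e := by noncomm_ring
      _ = ((e' * t) * f') * d + e' * e := by rw [hkey]; noncomm_ring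
  have he'F : e' ∈ F.carrier := by
    rw [halg]
    exact F.add_mem (F.mul_mem_right d (F.mul_mem_left (e' * t) hf'F))
      (F.mul_mem_left e' heF)
  exact he'q' ▸ F.mul_mem_right q' he'F
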